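/- Define ξ(z₁, z₂) := E[Z² | z₁ ≤ Z ≤ z₂] for Z ~ N(0,1) and 0 ≤ z₁ ≤ 1 ≤ z₂. Then ξ is continuous and monotonically increasing in each argument, ξ(1,1) = 1, ξ(0, ∞) = 1, and there exists a continuous decreasing function ν: [1, ∞) → (0, 1] with ν(1) = 1, lim_{z→∞} ν(z) = 0, and ξ(ν(z), z) = 1 for all z ∈ [1, ∞). -/

import Mathlib

open MeasureTheory ProbabilityTheory

/-- `ξ(z₁, z₂) = E[Z² | z₁ ≤ Z ≤ z₂]` for a standard Gaussian `Z`. -/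
noncomputable def xi (z₁ z₂ : ℝ) : ℝ :=
  (∫ x in Set.Icc z₁ z₂, x ^ 2 ∂(gaussianReal 0 1))
    / ((gaussianReal 0 1) (Set.Icc z₁ z₂)).toReal

namespace XiAux

open Set Filter


noncomputable def phi (x : ℝ) : ℝ := gaussianPDFReal 0 1 x

lemma phi_pos (x : ℝ) : 0 < phi x := gaussianPDFReal_pos 0 1 x one_ne_zero

lemma phi_eq : phi = fun x => (Real.sqrt (2 * Real.pi))⁻¹ * Real.exp (-x ^ 2 / 2) := by
  funext x
  simp [phi, gaussianPDFReal]

lemma continuous_phi : Continuous phi := by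
  rw [phi_eq]
  fun_prop

lemma phi_neg (x : ℝ) : phi (-x) = phi x := by
  rw [phi_eq]; simp

lemma hasDerivAt_phi (x : ℝ) : HasDerivAt phi (-x * phi x) x := by
  have h1 : HasDerivAt (fun x : ℝ => -x ^ 2 / 2) (-x) x := by
    have := ((hasDerivAt_pow 2 x).neg).div_const 2
    exact this.congr_deriv (by ring)
  have h2 := (h1.exp).const_mul (Real.sqrt (2 * Real.pi))⁻¹
  rw [phi_eq]
  exact h2.congr_deriv (by beta_reduce; ring)


noncomputable def g (t : ℝ) : ℝ := t * phi t

lemma continuous_g : Continuous g := continuous_id.mul continuous_phi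

lemma hasDerivAt_g (t : ℝ) : HasDerivAt g ((1 - t ^ 2) * phi t) t := by
  have := (hasDerivAt_id t).mul (hasDerivAt_phi t)
  refine this.congr_deriv (Eq.symm ?_)
  show (1 - t ^ 2) * phi t = 1 * phi t + t * (-t * phi t)
  ring

lemma g_pos {t : ℝ} (ht : 0 < t) : 0 < g t := mul_pos ht (phi_pos t)

noncomputable def F (b : ℝ) : ℝ := ∫ x in (0:ℝ)..b, phi x

lemma hasDerivAt_F (b : ℝ) : HasDerivAt F (phi b) b :=
  (continuous_phi.integral_hasStrictDerivAt 0 b).hasDerivAt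

lemma continuous_F : Continuous F :=
  continuous_iff_continuousAt.2 fun x => (hasDerivAt_F x).continuousAt

noncomputable def G (b : ℝ) : ℝ := F b - g b

lemma continuous_G : Continuous G := continuous_F.sub continuous_g

lemma hasDerivAt_G (b : ℝ) : HasDerivAt G (b ^ 2 * phi b) b := by
  have := (hasDerivAt_F b).sub (hasDerivAt_g b)
  refine this.congr_deriv (Eq.symm ?_)
  ring

lemma F_strictMono : StrictMono F :=
  strictMono_of_deriv_pos fun x => by
    rw [(hasDerivAt_F x).deriv]; exact phi_pos x

lemma d_pos {a b : ℝ} (hab : a < b) : 0 < F b - F a := sub_pos.2 (F_strictMono hab)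

lemma integ_phi (a b : ℝ) : ∫ x in a..b, phi x = F b - F a :=
  intervalIntegral.integral_eq_sub_of_hasDerivAt (fun x _ => hasDerivAt_F x)
    (continuous_phi.intervalIntegrable a b)

lemma continuous_sq_phi : Continuous fun x : ℝ => x ^ 2 * phi x :=
  (continuous_pow 2).mul continuous_phi

lemma integ_sq_phi (a b : ℝ) : ∫ x in a..b, x ^ 2 * phi x = G b - G a :=
  intervalIntegral.integral_eq_sub_of_hasDerivAt (fun x _ => hasDerivAt_G x)
    (continuous_sq_phi.intervalIntegrable a b)

lemma gauss_Icc {a b : ℝ} (hab : a ≤ b) :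
    ((gaussianReal 0 1) (Set.Icc a b)).toReal = F b - F a := by
  rw [gaussianReal_apply_eq_integral 0 one_ne_zero,
    ENNReal.toReal_ofReal (setIntegral_nonneg measurableSet_Icc
      fun x _ => gaussianPDFReal_nonneg 0 1 x)]
  rw [MeasureTheory.integral_Icc_eq_integral_Ioc, ← intervalIntegral.integral_of_le hab]
  exact integ_phi a b

lemma gauss_pdf_eq : gaussianPDF 0 1 =
    fun x => ((Real.toNNReal (gaussianPDFReal 0 1 x) : NNReal) : ENNReal) := rfl

lemma smul_fun_eq : (fun x : ℝ => (Real.toNNReal (gaussianPDFReal 0 1 x) : NNReal) • x ^ 2)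
    = fun x : ℝ => x ^ 2 * phi x := by
  funext x
  rw [NNReal.smul_def, smul_eq_mul,
    Real.coe_toNNReal _ (gaussianPDFReal_nonneg 0 1 x)]
  simp only [phi]
  ring

lemma integral_sq_Icc {a b : ℝ} (hab : a ≤ b) :
    ∫ x in Set.Icc a b, x ^ 2 ∂(gaussianReal 0 1) = G b - G a := by
  rw [gaussianReal_of_var_ne_zero 0 one_ne_zero, gauss_pdf_eq,
    setIntegral_withDensity_eq_setIntegral_smul
      (measurable_gaussianPDFReal 0 1).real_toNNReal _ measurableSet_Icc]
  rw [smul_fun_eq, MeasureTheory.integral_Icc_eq_integral_Ioc, ← intervalIntegral.integral_of_le hab]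
  exact integ_sq_phi a b


lemma num_le {a b : ℝ} (hab : a ≤ b) (ha : 0 ≤ a) : G b - G a ≤ b ^ 2 * (F b - F a) := by
  have h2 : ∫ x in a..b, b ^ 2 * phi x = b ^ 2 * (F b - F a) := by
    rw [intervalIntegral.integral_const_mul, integ_phi]
  rw [← integ_sq_phi a b, ← h2]
  refine intervalIntegral.integral_mono_on hab (continuous_sq_phi.intervalIntegrable a b)
    ((continuous_const.mul continuous_phi).intervalIntegrable a b) fun x hx => ?_
  have hx2 : x ^ 2 ≤ b ^ 2 := by nlinarith [hx.1, hx.2]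
  exact mul_le_mul_of_nonneg_right hx2 (phi_pos x).le

lemma num_ge {a b : ℝ} (hab : a ≤ b) (ha : 0 ≤ a) : a ^ 2 * (F b - F a) ≤ G b - G a := by
  have h2 : ∫ x in a..b, a ^ 2 * phi x = a ^ 2 * (F b - F a) := by
    rw [intervalIntegral.integral_const_mul, integ_phi]
  rw [← integ_sq_phi a b, ← h2]
  refine intervalIntegral.integral_mono_on hab
    ((continuous_const.mul continuous_phi).intervalIntegrable a b)
    (continuous_sq_phi.intervalIntegrable a b) fun x hx => ?_
  have hx2 : a ^ 2 ≤ x ^ 2 := by nlinarith [hx.1, hx.2]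
  exact mul_le_mul_of_nonneg_right hx2 (phi_pos x).le

/-- strict lower bound: for `0 ≤ a ≤ 1 < b`, `a² (F b - F a) < G b - G a`. -/
lemma num_gt {a b : ℝ} (ha : 0 ≤ a) (ha1 : a ≤ 1) (hb : 1 < b) :
    a ^ 2 * (F b - F a) < G b - G a := by
  set m : ℝ := (1 + b) / 2 with hm
  have hm1 : 1 < m := by rw [hm]; linarith
  have hmb : m < b := by rw [hm]; linarith
  have ham : a < m := lt_of_le_of_lt ha1 hm1
  have h1 : a ^ 2 * (F m - F a) ≤ G m - G a := num_ge ham.le ha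
  have h2 : m ^ 2 * (F b - F m) ≤ G b - G m := num_ge hmb.le (by linarith)
  have h3 : a ^ 2 < m ^ 2 := by nlinarith
  have h4 : 0 < F b - F m := d_pos hmb
  nlinarith [mul_lt_mul_of_pos_right h3 h4]

/-- strict upper bound: for `0 ≤ a < 1 ≤ b`, `G b - G a < b² (F b - F a)`. -/
lemma num_lt {a b : ℝ} (ha : 0 ≤ a) (ha1 : a < 1) (hb : 1 ≤ b) :
    G b - G a < b ^ 2 * (F b - F a) := by
  set m : ℝ := (a + 1) / 2 with hm
  have ham : a < m := by rw [hm]; linarith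
  have hm1 : m < 1 := by rw [hm]; linarith
  have hmb : m < b := lt_of_lt_of_le hm1 hb
  have h1 : G m - G a ≤ m ^ 2 * (F m - F a) := num_le ham.le ha
  have h2 : G b - G m ≤ b ^ 2 * (F b - F m) := num_le hmb.le (by linarith)
  have h3 : m ^ 2 < b ^ 2 := by nlinarith
  have h4 : 0 < F m - F a := d_pos ham
  nlinarith [mul_lt_mul_of_pos_right h3 h4]


lemma integrable_phi : Integrable phi := integrable_gaussianPDFReal 0 1

lemma integral_phi_Ioi : ∫ x in Set.Ioi (0:ℝ), phi x = 1 / 2 := by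
  have hsym : ∫ x in Set.Ioi (0:ℝ), phi x = ∫ x in Set.Iic (0:ℝ), phi x := by
    have := integral_comp_neg_Ioi (0:ℝ) phi
    simp only [neg_zero] at this
    rw [← this]
    simp_rw [phi_neg]
  have htot : (∫ x in Set.Iic (0:ℝ), phi x) + ∫ x in Set.Ioi (0:ℝ), phi x = ∫ x, phi x :=
    intervalIntegral.integral_Iic_add_Ioi integrable_phi.integrableOn integrable_phi.integrableOn
  have h1 : ∫ x, phi x = 1 := integral_gaussianPDFReal_eq_one 0 one_ne_zero
  linarith

lemma integrable_sq_phi : Integrable fun x : ℝ => x ^ 2 * phi x := by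
  have base := integrable_rpow_mul_exp_neg_mul_sq (b := (1/2:ℝ)) (by norm_num) (s := 2)
    (by norm_num)
  have := base.const_mul (Real.sqrt (2 * Real.pi))⁻¹
  refine this.congr ?_
  refine ae_of_all _ fun x => ?_
  dsimp only
  rw [Real.rpow_two, phi_eq]
  have : -(1/2 : ℝ) * x ^ 2 = -x ^ 2 / 2 := by ring
  rw [this]
  ring

lemma tendsto_g_atTop : Tendsto g atTop (nhds 0) := by
  have h := tendsto_rpow_abs_mul_exp_neg_mul_sq_cocompact (a := (1/2:ℝ)) (by norm_num) 1
  have h2 : Tendsto (fun x : ℝ => |x| ^ (1:ℝ) * Real.exp (-(1/2) * x ^ 2)) atTop (nhds 0) :=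
    h.mono_left atTop_le_cocompact
  have h3 := h2.const_mul (Real.sqrt (2 * Real.pi))⁻¹
  rw [mul_zero] at h3
  refine h3.congr' ?_
  filter_upwards [eventually_ge_atTop (0:ℝ)] with x hx
  rw [Real.rpow_one, abs_of_nonneg hx]
  simp only [g, phi_eq]
  have : -(1/2 : ℝ) * x ^ 2 = -x ^ 2 / 2 := by ring
  rw [this]
  ring

lemma tendsto_F_atTop : Tendsto F atTop (nhds (1/2)) := by
  have := intervalIntegral_tendsto_integral_Ioi (μ := volume) 0
    integrable_phi.integrableOn (tendsto_id (α := ℝ))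
  rw [integral_phi_Ioi] at this
  exact this

lemma integral_sq_phi_Ioi : ∫ x in Set.Ioi (0:ℝ), x ^ 2 * phi x = 1 / 2 := by
  have T1 := intervalIntegral_tendsto_integral_Ioi (μ := volume) 0
    integrable_sq_phi.integrableOn (tendsto_id (α := ℝ))
  have hG0 : G 0 = 0 := by
    simp [G, F, g, intervalIntegral.integral_same]
  have T1' : Tendsto G atTop (nhds (∫ x in Set.Ioi (0:ℝ), x ^ 2 * phi x)) := by
    refine T1.congr fun b => ?_
    simp only [id_eq]
    rw [integ_sq_phi 0 b, hG0, sub_zero]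
  have T2 : Tendsto G atTop (nhds (1/2)) := by
    have := tendsto_F_atTop.sub tendsto_g_atTop
    rw [sub_zero] at this
    exact this
  exact (tendsto_nhds_unique T1' T2)


lemma g_zero : g 0 = 0 := by simp [g]

lemma g_strictMonoOn : StrictMonoOn g (Set.Icc (0:ℝ) 1) := by
  refine strictMonoOn_of_deriv_pos (convex_Icc 0 1) continuous_g.continuousOn fun t ht => ?_
  rw [interior_Icc] at ht
  rw [(hasDerivAt_g t).deriv]
  have h1 : 0 < 1 - t ^ 2 := by nlinarith [ht.1, ht.2]
  exact mul_pos h1 (phi_pos t)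

lemma g_strictAntiOn : StrictAntiOn g (Set.Ici (1:ℝ)) := by
  refine strictAntiOn_of_deriv_neg (convex_Ici 1) continuous_g.continuousOn fun t ht => ?_
  rw [interior_Ici] at ht
  rw [(hasDerivAt_g t).deriv]
  have h1 : 1 - t ^ 2 < 0 := by nlinarith [Set.mem_Ioi.1 ht]
  exact mul_neg_of_neg_of_pos h1 (phi_pos t)

lemma g_mem_of_one_le {z : ℝ} (hz : 1 ≤ z) : g z ∈ Set.Icc (0:ℝ) (g 1) := by
  constructor
  · exact (g_pos (lt_of_lt_of_le one_pos hz)).le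
  · exact g_strictAntiOn.antitoneOn (Set.self_mem_Ici) hz hz

lemma exists_nu : ∃ ν : ℝ → ℝ, Continuous ν ∧
    (∀ z, 1 ≤ z → ν z ∈ Set.Icc (0:ℝ) 1 ∧ g (ν z) = g z) ∧ Tendsto ν atTop (nhds 0) := by
  have g1pos : 0 < g 1 := g_pos one_pos
  haveI : CompactSpace (Set.Icc (0:ℝ) 1) := isCompact_iff_compactSpace.mp isCompact_Icc
  have hmapsto : ∀ x : Set.Icc (0:ℝ) 1, g x.1 ∈ Set.Icc (0:ℝ) (g 1) := by
    intro x
    rcases x.2 with ⟨h0, h1⟩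
    constructor
    · rcases h0.lt_or_eq with h | h
      · exact (g_pos h).le
      · rw [← h, g_zero]
    · exact g_strictMonoOn.monotoneOn x.2 (Set.right_mem_Icc.2 zero_le_one) h1
  set gK : Set.Icc (0:ℝ) 1 → Set.Icc (0:ℝ) (g 1) := fun x => ⟨g x.1, hmapsto x⟩ with hgK
  have hinj : Function.Injective gK := by
    intro x y hxy
    have := congrArg Subtype.val hxy
    exact Subtype.ext (g_strictMonoOn.injOn x.2 y.2 this)
  have hsurj : Function.Surjective gK := by
    intro y
    have hsub : Set.Icc (g 0) (g 1) ⊆ g '' Set.Icc 0 1 :=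
      intermediate_value_Icc zero_le_one continuous_g.continuousOn
    rw [g_zero] at hsub
    obtain ⟨x, hx, hgx⟩ := hsub y.2
    exact ⟨⟨x, hx⟩, Subtype.ext hgx⟩
  have hcont : Continuous gK :=
    (continuous_g.comp continuous_subtype_val).subtype_mk _
  let E := Equiv.ofBijective gK ⟨hinj, hsurj⟩
  have hEcont : Continuous E := hcont
  let H := hEcont.homeoOfEquivCompactToT2
  have hHval : ∀ y : Set.Icc (0:ℝ) (g 1), g (H.symm y).1 = y.1 := by
    intro y
    have := H.apply_symm_apply y
    exact congrArg Subtype.val this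
  refine ⟨fun z => (H.symm (Set.projIcc 0 (g 1) g1pos.le (g z))).1, ?_, ?_, ?_⟩
  · exact continuous_subtype_val.comp
      (H.symm.continuous.comp (continuous_projIcc.comp continuous_g))
  · intro z hz
    refine ⟨(H.symm _).2, ?_⟩
    dsimp only
    rw [Set.projIcc_of_mem g1pos.le (g_mem_of_one_le hz)]
    exact hHval _
  · have hkey : (H.symm (Set.projIcc 0 (g 1) g1pos.le (g 0))).1 = 0 := by
      rw [g_zero, Set.projIcc_of_mem g1pos.le (Set.left_mem_Icc.2 g1pos.le)]
      have hH0 : H ⟨0, Set.left_mem_Icc.2 zero_le_one⟩ = ⟨0, Set.left_mem_Icc.2 g1pos.le⟩ := by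
        apply Subtype.ext
        exact g_zero
      rw [← hH0, H.symm_apply_apply]
    have houter : Continuous fun y : ℝ =>
        (H.symm (Set.projIcc 0 (g 1) g1pos.le y)).1 :=
      continuous_subtype_val.comp (H.symm.continuous.comp continuous_projIcc)
    have := (houter.tendsto 0).comp tendsto_g_atTop
    rw [show (Set.projIcc 0 (g 1) g1pos.le 0) = Set.projIcc 0 (g 1) g1pos.le (g 0) by
      rw [g_zero]] at this
    rw [hkey] at this
    exact this


lemma xi_eq {a b : ℝ} (hab : a ≤ b) : xi a b = (G b - G a) / (F b - F a) := by
  rw [xi, integral_sq_Icc hab, gauss_Icc hab]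

end XiAux

open XiAux Filter in
/-- **Properties of the conditional second moment `ξ` and existence of `ν`.**
`ξ` is continuous and strictly increasing in each argument on `{0 ≤ z₁ ≤ 1 ≤ z₂}`,
`ξ → 1` at the degenerate corner `(1,1)`, `E[Z² | Z ≥ 0] = 1`, and there is a continuous
strictly decreasing `ν : [1,∞) → (0,1]` with `ν(1) = 1`, `ν(z) → 0` as `z → ∞`, and
`ξ(ν(z), z) = 1` for all `z > 1`. -/
theorem xi_properties :
    ContinuousOn (fun p : ℝ × ℝ => xi p.1 p.2)
      {p : ℝ × ℝ | 0 ≤ p.1 ∧ p.1 ≤ 1 ∧ 1 ≤ p.2 ∧ p ≠ (1, 1)}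
    ∧ (∀ z₂ : ℝ, 1 < z₂ → StrictMonoOn (fun z₁ => xi z₁ z₂) (Set.Icc 0 1))
    ∧ (∀ z₁ : ℝ, 0 ≤ z₁ → z₁ < 1 → StrictMonoOn (fun z₂ => xi z₁ z₂) (Set.Ici 1))
    ∧ Filter.Tendsto (fun p : ℝ × ℝ => xi p.1 p.2)
        (nhdsWithin (1, 1) {p : ℝ × ℝ | 0 ≤ p.1 ∧ p.1 ≤ 1 ∧ 1 ≤ p.2 ∧ p ≠ (1, 1)})
        (nhds 1)
    ∧ (∫ x in Set.Ici (0 : ℝ), x ^ 2 ∂(gaussianReal 0 1))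
        / ((gaussianReal 0 1) (Set.Ici (0 : ℝ))).toReal = 1
    ∧ ∃ ν : ℝ → ℝ, ContinuousOn ν (Set.Ici 1) ∧ StrictAntiOn ν (Set.Ici 1)
        ∧ ν 1 = 1 ∧ (∀ z, 1 ≤ z → ν z ∈ Set.Ioc (0 : ℝ) 1)
        ∧ Filter.Tendsto ν Filter.atTop (nhds 0)
        ∧ ∀ z, 1 < z → xi (ν z) z = 1 := by
  have hsublt : ∀ p : ℝ × ℝ,
      p ∈ {p : ℝ × ℝ | 0 ≤ p.1 ∧ p.1 ≤ 1 ∧ 1 ≤ p.2 ∧ p ≠ (1, 1)} → p.1 < p.2 := by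
    rintro ⟨a, b⟩ ⟨h0, h1, h2, hne⟩
    rcases lt_or_eq_of_le h1 with h | h
    · exact lt_of_lt_of_le h h2
    · rcases lt_or_eq_of_le h2 with h' | h'
      · rw [h]; exact h'
      · exact absurd (Prod.ext h h'.symm) hne
  refine ⟨?_, ?_, ?_, ?_, ?_, ?_⟩
  · -- continuity
    refine ContinuousOn.congr
      (f := fun p : ℝ × ℝ => (G p.2 - G p.1) / (F p.2 - F p.1)) ?_ ?_
    · exact (((continuous_G.comp continuous_snd).sub
          (continuous_G.comp continuous_fst)).continuousOn).div
        (((continuous_F.comp continuous_snd).sub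
          (continuous_F.comp continuous_fst)).continuousOn)
        (fun p hp => ne_of_gt (d_pos (hsublt p hp)))
    · intro p hp
      exact xi_eq (hsublt p hp).le
  · -- strict mono in z₁
    intro b hb a ha a' ha' haa'
    have hab : a < b := lt_of_le_of_lt ha.2 hb
    have ha'b : a' < b := lt_of_le_of_lt ha'.2 hb
    show xi a b < xi a' b
    rw [xi_eq hab.le, xi_eq ha'b.le, div_lt_div_iff₀ (d_pos hab) (d_pos ha'b)]
    have h1 : G a' - G a ≤ a' ^ 2 * (F a' - F a) := num_le haa'.le ha.1
    have h2 : a' ^ 2 * (F b - F a') < G b - G a' := num_gt ha'.1 ha'.2 hb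
    have d1 : 0 < F a' - F a := d_pos haa'
    have d2 : 0 < F b - F a' := d_pos ha'b
    nlinarith [mul_le_mul_of_nonneg_right h1 d2.le, mul_lt_mul_of_pos_right h2 d1]
  · -- strict mono in z₂
    intro a ha0 ha1 b hb b' hb' hbb'
    have hab : a < b := lt_of_lt_of_le ha1 hb
    have hab' : a < b' := lt_of_lt_of_le ha1 hb'
    show xi a b < xi a b'
    rw [xi_eq hab.le, xi_eq hab'.le, div_lt_div_iff₀ (d_pos hab) (d_pos hab')]
    have h1 : G b - G a < b ^ 2 * (F b - F a) := num_lt ha0 ha1 hb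
    have h2 : b ^ 2 * (F b' - F b) ≤ G b' - G b := num_ge hbb'.le (by linarith)
    have d1 : 0 < F b - F a := d_pos hab
    have d2 : 0 < F b' - F b := d_pos hbb'
    nlinarith [mul_lt_mul_of_pos_right h1 d2, mul_le_mul_of_nonneg_right h2 d1.le]
  · -- tendsto at the corner
    have hlow : ∀ p ∈ {p : ℝ × ℝ | 0 ≤ p.1 ∧ p.1 ≤ 1 ∧ 1 ≤ p.2 ∧ p ≠ (1, 1)},
        p.1 ^ 2 ≤ xi p.1 p.2 := by
      intro p hp
      have hlt := hsublt p hp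
      rw [xi_eq hlt.le, le_div_iff₀ (d_pos hlt)]
      exact num_ge hlt.le hp.1
    have hup : ∀ p ∈ {p : ℝ × ℝ | 0 ≤ p.1 ∧ p.1 ≤ 1 ∧ 1 ≤ p.2 ∧ p ≠ (1, 1)},
        xi p.1 p.2 ≤ p.2 ^ 2 := by
      intro p hp
      have hlt := hsublt p hp
      rw [xi_eq hlt.le, div_le_iff₀ (d_pos hlt)]
      exact num_le hlt.le hp.1
    have h1 : Tendsto (fun p : ℝ × ℝ => p.1 ^ 2)
        (nhdsWithin (1, 1) {p : ℝ × ℝ | 0 ≤ p.1 ∧ p.1 ≤ 1 ∧ 1 ≤ p.2 ∧ p ≠ (1, 1)})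
        (nhds 1) := by
      have h := (continuous_fst.pow 2).tendsto ((1 : ℝ), (1 : ℝ))
      simp only [Pi.pow_apply, one_pow] at h
      exact h.mono_left nhdsWithin_le_nhds
    have h2 : Tendsto (fun p : ℝ × ℝ => p.2 ^ 2)
        (nhdsWithin (1, 1) {p : ℝ × ℝ | 0 ≤ p.1 ∧ p.1 ≤ 1 ∧ 1 ≤ p.2 ∧ p ≠ (1, 1)})
        (nhds 1) := by
      have h := (continuous_snd.pow 2).tendsto ((1 : ℝ), (1 : ℝ))
      simp only [Pi.pow_apply, one_pow] at h
      exact h.mono_left nhdsWithin_le_nhds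
    refine tendsto_of_tendsto_of_tendsto_of_le_of_le' h1 h2 ?_ ?_
    · filter_upwards [self_mem_nhdsWithin] with p hp using hlow p hp
    · filter_upwards [self_mem_nhdsWithin] with p hp using hup p hp
  · -- E[Z² | Z ≥ 0] = 1
    have hd : ((gaussianReal 0 1) (Set.Ici (0 : ℝ))).toReal = 1 / 2 := by
      rw [gaussianReal_apply_eq_integral 0 one_ne_zero,
        ENNReal.toReal_ofReal (setIntegral_nonneg measurableSet_Ici
          fun x _ => gaussianPDFReal_nonneg 0 1 x),
        MeasureTheory.integral_Ici_eq_integral_Ioi]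
      exact integral_phi_Ioi
    have hn : (∫ x in Set.Ici (0 : ℝ), x ^ 2 ∂(gaussianReal 0 1)) = 1 / 2 := by
      rw [gaussianReal_of_var_ne_zero 0 one_ne_zero, gauss_pdf_eq,
        setIntegral_withDensity_eq_setIntegral_smul
          (measurable_gaussianPDFReal 0 1).real_toNNReal _ measurableSet_Ici,
        smul_fun_eq, MeasureTheory.integral_Ici_eq_integral_Ioi]
      exact integral_sq_phi_Ioi
    rw [hn, hd]
    norm_num
  · -- existence of ν
    obtain ⟨ν, hνc, hνk, hνt⟩ := exists_nu
    have hmem : ∀ z, 1 ≤ z → ν z ∈ Set.Ioc (0 : ℝ) 1 := by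
      intro z hz
      obtain ⟨⟨h0, h1⟩, hg⟩ := hνk z hz
      refine ⟨?_, h1⟩
      rcases h0.lt_or_eq with h | h
      · exact h
      · exfalso
        have hz0 : g z = 0 := by rw [← hg, ← h, g_zero]
        exact absurd hz0 (ne_of_gt (g_pos (lt_of_lt_of_le one_pos hz)))
    refine ⟨ν, hνc.continuousOn, ?_, ?_, hmem, hνt, ?_⟩
    · intro z hz z' hz' hlt
      have hgz : g (ν z) = g z := (hνk z hz).2
      have hgz' : g (ν z') = g z' := (hνk z' hz').2
      have hglt : g z' < g z := g_strictAntiOn hz hz' hlt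
      by_contra hcon
      push_neg at hcon
      have hmono := g_strictMonoOn.monotoneOn (hνk z hz).1 (hνk z' hz').1 hcon
      rw [hgz, hgz'] at hmono
      linarith
    · have hg1 : g (ν 1) = g 1 := (hνk 1 le_rfl).2
      exact g_strictMonoOn.injOn (hνk 1 le_rfl).1 (Set.right_mem_Icc.2 zero_le_one) hg1
    · intro z hz
      have hm := hmem z hz.le
      have hgz : g (ν z) = g z := (hνk z hz.le).2
      have hlt : ν z < z := lt_of_le_of_lt hm.2 hz
      rw [xi_eq hlt.le]
      have hGF : G z - G (ν z) = F z - F (ν z) := by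
        simp only [G]
        rw [hgz]
        ring
      rw [hGF, div_self (ne_of_gt (d_pos hlt))]
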